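/- Let M be a Coxeter matrix with Coxeter group W generated by s_1, …, s_n, let T be the set of reflections of W, and let A be the Artin group of type M. Then: (1) the assignment σ_i ↦ U_i determines a (unique) group homomorphism U: A → Sym(ℤ × T); (2) for every g ∈ A and (k, r) ∈ ℤ × T, if U(g)(k, r) = (k', r') then u(μ(g))((−1)^k, r) = ((−1)^{k'}, r'), where μ: A → W is the standard epimorphism; (3) for every k ∈ ℤ, the shift L_k ∈ Sym(ℤ × T) defined by L_k(l, t) = (k + l, t) commutes with each U_i, and in particular U(g)(k, t) = L_k(U(g)(0, t)) for all g ∈ A. -/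

import Mathlib

open Function

/-- The alternating word `⟨i j⟩^m = i j i j ⋯` with `m` factors, in the free group. -/
def altWord {α : Type*} (i j : α) : ℕ → FreeGroup α
  | 0 => 1
  | m + 1 => FreeGroup.of i * altWord j i m

/-- The braid relations of an Artin group of type `M` (an entry `0` encodes `∞`). -/
def artinRels {n : ℕ} (M : Matrix (Fin n) (Fin n) ℕ) : Set (FreeGroup (Fin n)) :=
  {r | ∃ i j : Fin n, i ≠ j ∧ M i j ≠ 0 ∧
      r = altWord i j (M i j) * (altWord j i (M i j))⁻¹}

/-- The relations of the Coxeter group of type `M`. -/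
def coxRels {n : ℕ} (M : Matrix (Fin n) (Fin n) ℕ) : Set (FreeGroup (Fin n)) :=
  artinRels M ∪ {r | ∃ i : Fin n, r = FreeGroup.of i ^ 2}

/-- The Artin group of type `M`. -/
abbrev ArtinGroup {n : ℕ} (M : Matrix (Fin n) (Fin n) ℕ) : Type :=
  PresentedGroup (artinRels M)

/-- The Coxeter group of type `M`, as the quotient of the Artin group by `σᵢ² = 1`. -/
abbrev CoxGroup {n : ℕ} (M : Matrix (Fin n) (Fin n) ℕ) : Type :=
  PresentedGroup (coxRels M)

/-- The standard generators `σᵢ` of the Artin group. -/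
def σA {n : ℕ} (M : Matrix (Fin n) (Fin n) ℕ) (i : Fin n) : ArtinGroup M :=
  PresentedGroup.of i

/-- The standard generators `sᵢ` of the Coxeter group. -/
def sC {n : ℕ} (M : Matrix (Fin n) (Fin n) ℕ) (i : Fin n) : CoxGroup M :=
  PresentedGroup.of i

lemma lift_of_eq_mk {n : ℕ} (M : Matrix (Fin n) (Fin n) ℕ) (r : FreeGroup (Fin n)) :
    FreeGroup.lift (fun i => (PresentedGroup.of i : CoxGroup M)) r
      = PresentedGroup.mk (coxRels M) r := by
  have h : (FreeGroup.lift (fun i => (PresentedGroup.of i : CoxGroup M)))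
      = PresentedGroup.mk (coxRels M) :=
    FreeGroup.ext_hom _ _ (fun x => by simp [PresentedGroup.of])
  rw [h]

/-- The standard epimorphism `μ : A → W`. -/
def stdEpi {n : ℕ} (M : Matrix (Fin n) (Fin n) ℕ) : ArtinGroup M →* CoxGroup M :=
  PresentedGroup.toGroup (f := fun i => (PresentedGroup.of i : CoxGroup M)) (by
    intro r hr
    rw [lift_of_eq_mk]
    exact (QuotientGroup.eq_one_iff r).mpr
      (Subgroup.subset_normalClosure (Set.mem_union_left _ hr)))

@[simp] lemma stdEpi_of {n : ℕ} (M : Matrix (Fin n) (Fin n) ℕ) (i : Fin n) :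
    stdEpi M (σA M i) = sC M i :=
  PresentedGroup.toGroup.of _

/-- `φ : A → W` is ordinary if it is `α ∘ μ` for some automorphism `α` of `W`. -/
def Ordinary {n : ℕ} {M : Matrix (Fin n) (Fin n) ℕ}
    (φ : ArtinGroup M →* CoxGroup M) : Prop :=
  ∃ α : CoxGroup M ≃* CoxGroup M, φ = α.toMonoidHom.comp (stdEpi M)

/-- The set of reflections of the Coxeter group of type `M`. -/
def Refl {n : ℕ} (M : Matrix (Fin n) (Fin n) ℕ) : Set (CoxGroup M) :=
  {t | ∃ (w : CoxGroup M) (i : Fin n), t = w * sC M i * w⁻¹}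

lemma sC_sq {n : ℕ} (M : Matrix (Fin n) (Fin n) ℕ) (i : Fin n) :
    sC M i * sC M i = 1 := by
  have h1 : (FreeGroup.of i ^ 2 : FreeGroup (Fin n))
      ∈ Subgroup.normalClosure (coxRels M) :=
    Subgroup.subset_normalClosure (Set.mem_union_right _ ⟨i, rfl⟩)
  have h2 : PresentedGroup.mk (coxRels M) (FreeGroup.of i ^ 2) = 1 :=
    (QuotientGroup.eq_one_iff _).mpr h1
  simpa [sq, map_mul, sC, PresentedGroup.of] using h2

lemma sC_inv {n : ℕ} (M : Matrix (Fin n) (Fin n) ℕ) (i : Fin n) :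
    (sC M i)⁻¹ = sC M i :=
  inv_eq_of_mul_eq_one_right (sC_sq M i)

lemma conj_mem_Refl {n : ℕ} (M : Matrix (Fin n) (Fin n) ℕ) (i : Fin n)
    {t : CoxGroup M} (ht : t ∈ Refl M) : sC M i * t * sC M i ∈ Refl M := by
  obtain ⟨w, j, rfl⟩ := ht
  refine ⟨sC M i * w, j, ?_⟩
  rw [mul_inv_rev, sC_inv]
  simp [mul_assoc]

lemma conj_eq_self_iff {n : ℕ} (M : Matrix (Fin n) (Fin n) ℕ) (i : Fin n)
    (t : CoxGroup M) : sC M i * t * sC M i = sC M i ↔ t = sC M i := by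
  constructor
  · intro h
    have h2 : sC M i * (t * sC M i) = sC M i * 1 := by
      rw [mul_one]; rw [← mul_assoc]; exact h
    have h3 : t * sC M i = 1 := mul_left_cancel h2
    calc t = t * sC M i * sC M i := by rw [mul_assoc, sC_sq, mul_one]
    _ = sC M i := by rw [h3, one_mul]
  · rintro rfl
    rw [sC_sq, one_mul]

open Classical in
/-- The underlying map of `Uᵢ` (with increment `e` on the distinguished reflection). -/
noncomputable def UFun {n : ℕ} (M : Matrix (Fin n) (Fin n) ℕ) (i : Fin n) (e : ℤ) :
    ℤ × Refl M → ℤ × Refl M := fun p =>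
  if (p.2 : CoxGroup M) = sC M i then (p.1 + e, p.2)
  else (p.1, ⟨sC M i * p.2 * sC M i, conj_mem_Refl M i p.2.2⟩)

lemma UFun_pos {n : ℕ} (M : Matrix (Fin n) (Fin n) ℕ) (i : Fin n) (e k : ℤ)
    (t : Refl M) (h : (t : CoxGroup M) = sC M i) : UFun M i e (k, t) = (k + e, t) := by
  simp only [UFun, h, if_pos]

lemma UFun_neg {n : ℕ} (M : Matrix (Fin n) (Fin n) ℕ) (i : Fin n) (e k : ℤ)
    (t : Refl M) (h : ¬ (t : CoxGroup M) = sC M i) :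
    UFun M i e (k, t) = (k, ⟨sC M i * t * sC M i, conj_mem_Refl M i t.2⟩) := by
  simp only [UFun, h, if_neg, if_false]

lemma UFun_inverse {n : ℕ} (M : Matrix (Fin n) (Fin n) ℕ) (i : Fin n) (e : ℤ) :
    Function.LeftInverse (UFun M i (-e)) (UFun M i e) := by
  rintro ⟨k, t⟩
  by_cases h : (t : CoxGroup M) = sC M i
  · rw [UFun_pos M i e k t h, UFun_pos M i (-e) (k + e) t h]
    simp
  · rw [UFun_neg M i e k t h]
    have h' : ¬ (sC M i * (t : CoxGroup M) * sC M i = sC M i) := fun hc =>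
      h ((conj_eq_self_iff M i t).mp hc)
    rw [UFun_neg M i (-e) k _ h']
    refine Prod.ext rfl (Subtype.ext ?_)
    show sC M i * (sC M i * (t : CoxGroup M) * sC M i) * sC M i = (t : CoxGroup M)
    calc sC M i * (sC M i * (t : CoxGroup M) * sC M i) * sC M i
        = (sC M i * sC M i) * ((t : CoxGroup M) * (sC M i * sC M i)) := by
          simp only [mul_assoc]
      _ = (t : CoxGroup M) := by rw [sC_sq]; simp

/-- The permutation `Uᵢ` of `ℤ × T`: `(k, t) ↦ (k, sᵢ t sᵢ)` if `t ≠ sᵢ`, and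
`(k, sᵢ) ↦ (k + 1, sᵢ)`. -/
noncomputable def Uperm {n : ℕ} (M : Matrix (Fin n) (Fin n) ℕ) (i : Fin n) :
    Equiv.Perm (ℤ × Refl M) where
  toFun := UFun M i 1
  invFun := UFun M i (-1)
  left_inv := UFun_inverse M i 1
  right_inv := by
    have h := UFun_inverse M i (-1)
    rw [neg_neg] at h
    exact h

open Classical in
/-- The underlying map of Bourbaki's `uᵢ` on `{±1} × T`. -/
noncomputable def uFun {n : ℕ} (M : Matrix (Fin n) (Fin n) ℕ) (i : Fin n) :
    ℤˣ × Refl M → ℤˣ × Refl M := fun p =>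
  if (p.2 : CoxGroup M) = sC M i then (-p.1, p.2)
  else (p.1, ⟨sC M i * p.2 * sC M i, conj_mem_Refl M i p.2.2⟩)

lemma uFun_involutive {n : ℕ} (M : Matrix (Fin n) (Fin n) ℕ) (i : Fin n) :
    Function.Involutive (uFun M i) := by
  rintro ⟨e, t⟩
  by_cases h : (t : CoxGroup M) = sC M i
  · simp only [uFun, h, if_pos]
    simp
  · have h' : ¬ (sC M i * (t : CoxGroup M) * sC M i = sC M i) := fun hc =>
      h ((conj_eq_self_iff M i t).mp hc)
    simp only [uFun, h, if_neg, if_false, h']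
    refine Prod.ext rfl (Subtype.ext ?_)
    show sC M i * (sC M i * (t : CoxGroup M) * sC M i) * sC M i = (t : CoxGroup M)
    calc sC M i * (sC M i * (t : CoxGroup M) * sC M i) * sC M i
        = (sC M i * sC M i) * ((t : CoxGroup M) * (sC M i * sC M i)) := by
          simp only [mul_assoc]
      _ = (t : CoxGroup M) := by rw [sC_sq]; simp

/-- Bourbaki's permutation `uᵢ` of `{±1} × T`: `(ε, t) ↦ (ε, sᵢ t sᵢ)` if `t ≠ sᵢ`,
and `(ε, sᵢ) ↦ (-ε, sᵢ)`. -/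
noncomputable def uperm {n : ℕ} (M : Matrix (Fin n) (Fin n) ℕ) (i : Fin n) :
    Equiv.Perm (ℤˣ × Refl M) :=
  (uFun_involutive M i).toPerm _

/-- The shift `L_k : (l, t) ↦ (k + l, t)` of `ℤ × T`. -/
def Lshift {n : ℕ} (M : Matrix (Fin n) (Fin n) ℕ) (k : ℤ) :
    Equiv.Perm (ℤ × Refl M) :=
  (Equiv.addLeft k).prodCongr (Equiv.refl (Refl M))

section BraidAux

variable {n : ℕ} (M : Matrix (Fin n) (Fin n) ℕ)

lemma wconj_mem_Refl (w : CoxGroup M) {t : CoxGroup M} (ht : t ∈ Refl M) :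
    w * t * w⁻¹ ∈ Refl M := by
  obtain ⟨v, j, rfl⟩ := ht
  exact ⟨w * v, j, by group⟩

lemma mulmul_sC (i : Fin n) (z : CoxGroup M) : sC M i * (sC M i * z) = z := by
  rw [← mul_assoc, sC_sq, one_mul]

def wC (L : List (Fin n)) : CoxGroup M := (L.map (sC M)).prod

@[simp] lemma wC_nil : wC M ([] : List (Fin n)) = 1 := rfl
@[simp] lemma wC_cons (i : Fin n) (L : List (Fin n)) :
    wC M (i :: L) = sC M i * wC M L := by simp [wC]

noncomputable def Uword (L : List (Fin n)) : Equiv.Perm (ℤ × Refl M) :=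
  (L.map (Uperm M)).prod

@[simp] lemma Uword_nil : Uword M ([] : List (Fin n)) = 1 := rfl
@[simp] lemma Uword_cons (i : Fin n) (L : List (Fin n)) :
    Uword M (i :: L) = Uperm M i * Uword M L := by simp [Uword]

open Classical in
noncomputable def cnt (c : CoxGroup M) : List (CoxGroup M) → ℕ
  | [] => 0
  | a :: l => (if a = c then 1 else 0) + cnt c l

open Classical in
lemma cnt_cons (c a : CoxGroup M) (l : List (CoxGroup M)) :
    cnt M c (a :: l) = (if a = c then 1 else 0) + cnt M c l := rfl

lemma cnt_append (c : CoxGroup M) (l₁ l₂ : List (CoxGroup M)) :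
    cnt M c (l₁ ++ l₂) = cnt M c l₁ + cnt M c l₂ := by
  induction l₁ with
  | nil => simp [cnt]
  | cons a l ih => simp [cnt, ih]; omega

lemma cnt_reverse (c : CoxGroup M) (l : List (CoxGroup M)) :
    cnt M c l.reverse = cnt M c l := by
  induction l with
  | nil => rfl
  | cons a l ih =>
    rw [List.reverse_cons, cnt_append, ih]
    simp [cnt]; omega

def reflList : List (Fin n) → List (CoxGroup M)
  | [] => []
  | i :: L => ((wC M L)⁻¹ * sC M i * wC M L) :: reflList L

@[simp] lemma reflList_nil : reflList M ([] : List (Fin n)) = [] := rfl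
@[simp] lemma reflList_cons (i : Fin n) (L : List (Fin n)) :
    reflList M (i :: L) = ((wC M L)⁻¹ * sC M i * wC M L) :: reflList M L := rfl

def altList (i j : Fin n) : ℕ → List (Fin n)
  | 0 => []
  | m + 1 => i :: altList j i m

@[simp] lemma Uperm_eq_UFun (i : Fin n) (p : ℤ × Refl M) :
    Uperm M i p = UFun M i 1 p := rfl

@[simp] lemma uperm_eq_uFun (i : Fin n) (p : ℤˣ × Refl M) :
    uperm M i p = uFun M i p := rfl

/-- Lemma A : action of a word of generators. -/
lemma Uword_apply (L : List (Fin n)) (k : ℤ) (t : Refl M) :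
    Uword M L (k, t) =
      (k + (cnt M (t : CoxGroup M) (reflList M L) : ℤ),
       ⟨wC M L * t * (wC M L)⁻¹, wconj_mem_Refl M _ t.2⟩) := by
  induction L with
  | nil =>
    refine Prod.ext ?_ (Subtype.ext ?_)
    · simp [cnt]
    · simp
  | cons i L ih =>
    rw [Uword_cons, Equiv.Perm.mul_apply, ih, Uperm_eq_UFun]
    by_cases h : (t : CoxGroup M) = (wC M L)⁻¹ * sC M i * wC M L
    · have hc : wC M L * (t : CoxGroup M) * (wC M L)⁻¹ = sC M i := by
        rw [h]; group
      rw [UFun_pos M i 1 _ _ hc]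
      refine Prod.ext ?_ (Subtype.ext ?_)
      · show k + (cnt M ↑t (reflList M L) : ℤ) + 1
          = k + (cnt M ↑t (reflList M (i :: L)) : ℤ)
        rw [reflList_cons, cnt_cons, if_pos h.symm]
        push_cast; ring
      · show wC M L * (t : CoxGroup M) * (wC M L)⁻¹
          = wC M (i :: L) * t * (wC M (i :: L))⁻¹
        rw [wC_cons, mul_inv_rev, hc]
        calc sC M i = sC M i * (sC M i * ((sC M i)⁻¹)) := by
              rw [mul_inv_cancel, mul_one]
          _ = sC M i * (wC M L * ↑t * (wC M L)⁻¹ * (sC M i)⁻¹) := by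
              rw [hc]
          _ = sC M i * (wC M L * ↑t) * ((wC M L)⁻¹ * (sC M i)⁻¹) := by
              simp only [mul_assoc]
          _ = sC M i * wC M L * ↑t * ((wC M L)⁻¹ * (sC M i)⁻¹) := by
              simp only [mul_assoc]
    · have hc : ¬ (wC M L * (t : CoxGroup M) * (wC M L)⁻¹ = sC M i) := by
        intro hcon
        apply h
        rw [← hcon]; group
      rw [UFun_neg M i 1 _ _ hc]
      refine Prod.ext ?_ (Subtype.ext ?_)
      · show k + (cnt M ↑t (reflList M L) : ℤ)
          = k + (cnt M ↑t (reflList M (i :: L)) : ℤ)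
        rw [reflList_cons, cnt_cons, if_neg (fun hh => h hh.symm)]
        push_cast; ring
      · show sC M i * (wC M L * (t : CoxGroup M) * (wC M L)⁻¹) * sC M i
          = wC M (i :: L) * t * (wC M (i :: L))⁻¹
        rw [wC_cons, mul_inv_rev, sC_inv]
        simp only [mul_assoc]

lemma lift_altWord {G : Type*} [Group G] (f : Fin n → G) :
    ∀ (m : ℕ) (i j : Fin n),
      FreeGroup.lift f (altWord i j m) = ((altList i j m).map f).prod := by
  intro m
  induction m with
  | zero => intro i j; simp [altWord, altList]
  | succ m ih => intro i j; simp [altWord, altList, map_mul, ih]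

lemma mk_altWord (m : ℕ) (i j : Fin n) :
    PresentedGroup.mk (coxRels M) (altWord i j m) = wC M (altList i j m) := by
  rw [← lift_of_eq_mk, lift_altWord]; rfl

lemma wC_alt_eq (i j : Fin n) (hij : i ≠ j) (h0 : M i j ≠ 0) :
    wC M (altList i j (M i j)) = wC M (altList j i (M i j)) := by
  have hr : altWord i j (M i j) * (altWord j i (M i j))⁻¹ ∈ coxRels M :=
    Or.inl ⟨i, j, hij, h0, rfl⟩
  have h1 : PresentedGroup.mk (coxRels M)
      (altWord i j (M i j) * (altWord j i (M i j))⁻¹) = 1 :=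
    (QuotientGroup.eq_one_iff _).mpr (Subgroup.subset_normalClosure hr)
  rw [map_mul, map_inv, mul_inv_eq_one, mk_altWord, mk_altWord] at h1
  exact h1

lemma pq_one (i j : Fin n) : (sC M i * sC M j) * (sC M j * sC M i) = 1 := by
  rw [mul_assoc, mulmul_sC, sC_sq]

lemma qx_eq (i j : Fin n) : (sC M j * sC M i) * sC M i = sC M j := by
  rw [mul_assoc, sC_sq, mul_one]

lemma semiconj' (i j : Fin n) (m : ℕ) :
    sC M i * (sC M j * sC M i) ^ m = (sC M i * sC M j) ^ m * sC M i := by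
  have h : SemiconjBy (sC M i) (sC M j * sC M i) (sC M i * sC M j) :=
    (mul_assoc _ _ _).symm
  exact (h.pow_right m).eq

lemma sC_mul_p_pow (i j : Fin n) (m : ℕ) :
    sC M i * (sC M i * sC M j) ^ m = (sC M j * sC M i) ^ m * sC M i := by
  have h : SemiconjBy (sC M i) (sC M i * sC M j) (sC M j * sC M i) := by
    show sC M i * (sC M i * sC M j) = (sC M j * sC M i) * sC M i
    rw [mulmul_sC, qx_eq]
  exact (h.pow_right m).eq

lemma x_mul_p_succ (i j : Fin n) (l : ℕ) :
    sC M i * (sC M i * sC M j) ^ (l + 1) = (sC M j * sC M i) ^ l * sC M j := by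
  rw [sC_mul_p_pow, pow_succ, mul_assoc, qx_eq]

lemma wC_alt_mul_inv : ∀ (m : ℕ) (i j : Fin n),
    wC M (altList i j m) * (wC M (altList j i m))⁻¹ = (sC M i * sC M j) ^ m := by
  intro m
  induction m with
  | zero => intro i j; simp [altList]
  | succ m ih =>
    intro i j
    show wC M (i :: altList j i m) * (wC M (j :: altList i j m))⁻¹ = _
    rw [wC_cons, wC_cons, mul_inv_rev, sC_inv M j]
    have h1 : wC M (altList j i m) * ((wC M (altList i j m))⁻¹ * sC M j)
        = (sC M j * sC M i) ^ m * sC M j := by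
      rw [← mul_assoc, ih j i]
    rw [mul_assoc, h1, ← mul_assoc, semiconj', pow_succ, mul_assoc]

lemma reflList_alt : ∀ (m : ℕ) (i j : Fin n),
    reflList M (altList i j m) = (List.range m).map (fun l =>
      (wC M (altList i j m))⁻¹ * ((sC M i * sC M j) ^ l * sC M i)
        * wC M (altList i j m)) := by
  intro m
  induction m with
  | zero => intro i j; simp [altList]
  | succ m ih =>
    intro i j
    show reflList M (i :: altList j i m) = _
    rw [List.range_succ_eq_map, List.map_cons, List.map_map, reflList_cons, ih j i]
    congr 1
    · show (wC M (altList j i m))⁻¹ * sC M i * wC M (altList j i m)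
        = (wC M (altList i j (m+1)))⁻¹ * ((sC M i * sC M j) ^ 0 * sC M i)
          * wC M (altList i j (m+1))
      show _ = (wC M (i :: altList j i m))⁻¹ * ((sC M i * sC M j) ^ 0 * sC M i)
          * wC M (i :: altList j i m)
      rw [pow_zero, one_mul, wC_cons, mul_inv_rev, sC_inv]
      simp only [mul_assoc, mulmul_sC]
    · apply List.map_congr_left
      intro l _
      show (wC M (altList j i m))⁻¹ * ((sC M j * sC M i) ^ l * sC M j)
          * wC M (altList j i m)
        = (wC M (altList i j (m+1)))⁻¹
          * ((sC M i * sC M j) ^ (Nat.succ l) * sC M i) * wC M (altList i j (m+1))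
      show _ = (wC M (i :: altList j i m))⁻¹
          * ((sC M i * sC M j) ^ (l + 1) * sC M i) * wC M (i :: altList j i m)
      rw [wC_cons, mul_inv_rev, sC_inv]
      have key : sC M i * ((sC M i * sC M j) ^ (l + 1) * wC M (altList j i m))
          = (sC M j * sC M i) ^ l * (sC M j * wC M (altList j i m)) := by
        rw [← mul_assoc, x_mul_p_succ, mul_assoc]
      simp only [mul_assoc, mulmul_sC]
      rw [key]

lemma map_range_pred {α : Type*} (f : ℕ → α) :
    ∀ m : ℕ, (List.range m).map (fun l => f (m - 1 - l))
      = ((List.range m).map f).reverse := by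
  intro m
  induction m with
  | zero => simp
  | succ m ih =>
    calc (List.range (m+1)).map (fun l => f (m+1-1-l))
        = f (m+1-1-0) :: ((List.range m).map (fun l => f (m+1-1-(l+1)))) := by
          rw [List.range_succ_eq_map]; simp [List.map_map, Function.comp]
      _ = f m :: ((List.range m).map (fun l => f (m-1-l))) := by
          congr 1
          apply List.map_congr_left; intro l _; congr 1; omega
      _ = f m :: ((List.range m).map f).reverse := by rw [ih]
      _ = ((List.range (m+1)).map f).reverse := by
          rw [List.range_succ]; simp

lemma reflList_alt_swap (i j : Fin n) (hij : i ≠ j) (h0 : M i j ≠ 0) :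
    reflList M (altList j i (M i j)) = (reflList M (altList i j (M i j))).reverse := by
  have hΔ : wC M (altList i j (M i j)) = wC M (altList j i (M i j)) :=
    wC_alt_eq M i j hij h0
  have hp : (sC M i * sC M j) ^ (M i j) = 1 := by
    have h := wC_alt_mul_inv M (M i j) i j
    rw [hΔ, mul_inv_cancel] at h
    exact h.symm
  have hq : sC M j * sC M i = (sC M i * sC M j)⁻¹ :=
    eq_inv_of_mul_eq_one_right (pq_one M i j)
  rw [reflList_alt M (M i j) j i, reflList_alt M (M i j) i j, ← map_range_pred]
  apply List.map_congr_left
  intro l hl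
  have hlm : l < M i j := List.mem_range.mp hl
  rw [← hΔ]
  have hmid : (sC M j * sC M i) ^ l * sC M j
      = (sC M i * sC M j) ^ (M i j - 1 - l) * sC M i := by
    have h2 : (sC M i * sC M j) ^ (M i j - 1 - l) = (sC M j * sC M i) ^ (l + 1) := by
      rw [hq, inv_pow]
      apply eq_inv_of_mul_eq_one_left
      rw [← pow_add]
      have : M i j - 1 - l + (l + 1) = M i j := by omega
      rw [this, hp]
    rw [h2, pow_succ, mul_assoc, qx_eq]
  rw [hmid]

lemma Uword_braid (i j : Fin n) (hij : i ≠ j) (h0 : M i j ≠ 0) :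
    Uword M (altList i j (M i j)) = Uword M (altList j i (M i j)) := by
  apply Equiv.ext
  rintro ⟨k, t⟩
  rw [Uword_apply, Uword_apply]
  have hΔ : wC M (altList i j (M i j)) = wC M (altList j i (M i j)) :=
    wC_alt_eq M i j hij h0
  have hcnt : cnt M (t : CoxGroup M) (reflList M (altList j i (M i j)))
      = cnt M (t : CoxGroup M) (reflList M (altList i j (M i j))) := by
    rw [reflList_alt_swap M i j hij h0, cnt_reverse]
  refine Prod.ext ?_ (Subtype.ext ?_)
  · show k + _ = k + _
    rw [hcnt]
  · show wC M (altList i j (M i j)) * (t : CoxGroup M) * _⁻¹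
      = wC M (altList j i (M i j)) * (t : CoxGroup M) * _⁻¹
    rw [hΔ]

lemma braid_rels_hold : ∀ r ∈ artinRels M,
    FreeGroup.lift (fun i => Uperm M i) r = 1 := by
  rintro r ⟨i, j, hij, h0, rfl⟩
  rw [map_mul, map_inv, lift_altWord, lift_altWord]
  show Uword M (altList i j (M i j)) * (Uword M (altList j i (M i j)))⁻¹ = 1
  rw [Uword_braid M i j hij h0, mul_inv_cancel]

noncomputable def Uhom : ArtinGroup M →* Equiv.Perm (ℤ × Refl M) :=
  PresentedGroup.toGroup (braid_rels_hold M)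

@[simp] lemma Uhom_of (i : Fin n) : Uhom M (σA M i) = Uperm M i :=
  PresentedGroup.toGroup.of _

end BraidAux

/-- Lemma 3.7: (1) `σᵢ ↦ Uᵢ` determines a unique homomorphism `U : A → Sym(ℤ × T)`;
(2) `U` is compatible, via `μ` and `(-1)^k`, with Bourbaki's action `u` of `W` on
`{±1} × T`; (3) each shift `L_k` commutes with each `Uᵢ`, and
`U(g)(k, t) = L_k(U(g)(0, t))`. -/
theorem stmt_8 {n : ℕ} (M : Matrix (Fin n) (Fin n) ℕ)
    (hdiag : ∀ i, M i i = 1) (hsymm : ∀ i j, M i j = M j i)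
    (hoff : ∀ i j, i ≠ j → M i j ≠ 1) :
    (∃! U : ArtinGroup M →* Equiv.Perm (ℤ × Refl M),
      ∀ i, U (σA M i) = Uperm M i) ∧
    (∀ U : ArtinGroup M →* Equiv.Perm (ℤ × Refl M), (∀ i, U (σA M i) = Uperm M i) →
      ∀ u : CoxGroup M →* Equiv.Perm (ℤˣ × Refl M), (∀ i, u (sC M i) = uperm M i) →
      ∀ (g : ArtinGroup M) (k k' : ℤ) (r r' : Refl M),
        U g (k, r) = (k', r') →
        u (stdEpi M g) ((-1 : ℤˣ) ^ k, r) = ((-1 : ℤˣ) ^ k', r')) ∧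
    (∀ (k : ℤ) (i : Fin n), Lshift M k * Uperm M i = Uperm M i * Lshift M k) ∧
    (∀ U : ArtinGroup M →* Equiv.Perm (ℤ × Refl M), (∀ i, U (σA M i) = Uperm M i) →
      ∀ (g : ArtinGroup M) (k : ℤ) (t : Refl M),
        U g (k, t) = Lshift M k (U g (0, t))) := by
  have hLshift : ∀ (p : ℤ × Refl M) (k : ℤ), Lshift M k p = (k + p.1, p.2) :=
    fun p k => rfl
  refine ⟨⟨Uhom M, fun i => Uhom_of M i, ?_⟩, ?_, ?_, ?_⟩
  · -- uniqueness
    intro U hU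
    apply PresentedGroup.ext
    intro i
    rw [show (PresentedGroup.of i : ArtinGroup M) = σA M i from rfl, hU i, Uhom_of]
  · -- compatibility with u
    intro U hU u hu g k k' r r' hg
    have hP : ∀ g : ArtinGroup M, ∀ (k : ℤ) (r : Refl M),
        u (stdEpi M g) ((-1 : ℤˣ) ^ k, r)
          = ((-1 : ℤˣ) ^ ((U g (k, r)).1), (U g (k, r)).2) := by
      let H : Subgroup (ArtinGroup M) :=
      { carrier := {g | ∀ (k : ℤ) (r : Refl M),
          u (stdEpi M g) ((-1 : ℤˣ) ^ k, r)
            = ((-1 : ℤˣ) ^ ((U g (k, r)).1), (U g (k, r)).2)}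
        one_mem' := by
          intro k r
          simp
        mul_mem' := by
          intro a b ha hb k r
          calc u (stdEpi M (a * b)) ((-1 : ℤˣ) ^ k, r)
              = u (stdEpi M a) (u (stdEpi M b) ((-1 : ℤˣ) ^ k, r)) := by
                rw [map_mul, map_mul, Equiv.Perm.mul_apply]
            _ = u (stdEpi M a) ((-1 : ℤˣ) ^ ((U b (k, r)).1), (U b (k, r)).2) := by
                rw [hb k r]
            _ = ((-1 : ℤˣ) ^ ((U a ((U b (k, r)).1, (U b (k, r)).2)).1),
                  (U a ((U b (k, r)).1, (U b (k, r)).2)).2) := ha _ _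
            _ = ((-1 : ℤˣ) ^ ((U (a * b) (k, r)).1), (U (a * b) (k, r)).2) := by
                rw [Prod.mk.eta, map_mul, Equiv.Perm.mul_apply]
        inv_mem' := by
          intro a ha k r
          have h1 : U a ((U a⁻¹ (k, r)).1, (U a⁻¹ (k, r)).2) = (k, r) := by
            rw [Prod.mk.eta, ← Equiv.Perm.mul_apply, ← map_mul, mul_inv_cancel,
              map_one, Equiv.Perm.one_apply]
          have h2 := ha (U a⁻¹ (k, r)).1 (U a⁻¹ (k, r)).2
          rw [h1] at h2
          rw [map_inv, map_inv, ← h2, ← Equiv.Perm.mul_apply, inv_mul_cancel,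
            Equiv.Perm.one_apply] }
      intro g
      refine PresentedGroup.generated_by _ H ?_ g
      intro i0 k0 r0
      rw [show (PresentedGroup.of i0 : ArtinGroup M) = σA M i0 from rfl,
        stdEpi_of, hu i0, hU i0, Uperm_eq_UFun, uperm_eq_uFun]
      by_cases h : (r0 : CoxGroup M) = sC M i0
      · rw [UFun_pos M i0 1 k0 r0 h]
        show uFun M i0 ((-1 : ℤˣ) ^ k0, r0) = _
        rw [show uFun M i0 ((-1 : ℤˣ) ^ k0, r0) = (-(-1 : ℤˣ) ^ k0, r0) from by
          simp only [uFun, h, if_pos]]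
        refine Prod.ext ?_ rfl
        show -(-1 : ℤˣ) ^ k0 = (-1 : ℤˣ) ^ (k0 + 1)
        rw [zpow_add_one, mul_neg_one]
      · rw [UFun_neg M i0 1 k0 r0 h]
        show uFun M i0 ((-1 : ℤˣ) ^ k0, r0) = _
        simp only [uFun, h, if_neg, if_false]
    have := hP g k r
    rw [hg] at this
    exact this
  · -- shifts commute with the Uᵢ
    intro k i
    apply Equiv.ext
    rintro ⟨l, t⟩
    rw [Equiv.Perm.mul_apply, Equiv.Perm.mul_apply, Uperm_eq_UFun, Uperm_eq_UFun,
      hLshift (l, t) k]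
    by_cases h : (t : CoxGroup M) = sC M i
    · rw [UFun_pos M i 1 l t h, UFun_pos M i 1 (k + l) t h, hLshift (l + 1, t) k]
      refine Prod.ext ?_ rfl
      show k + (l + 1) = k + l + 1
      ring
    · rw [UFun_neg M i 1 l t h, UFun_neg M i 1 (k + l) t h]
      rfl
  · -- U g commutes with shifts
    intro U hU g k t
    have hC : ∀ g : ArtinGroup M, ∀ k : ℤ, Lshift M k * U g = U g * Lshift M k := by
      let H : Subgroup (ArtinGroup M) :=
      { carrier := {g | ∀ k : ℤ, Lshift M k * U g = U g * Lshift M k}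
        one_mem' := by intro k; simp
        mul_mem' := by
          intro a b ha hb k
          rw [map_mul, ← mul_assoc, ha k, mul_assoc, hb k, mul_assoc]
        inv_mem' := by
          intro a ha k
          rw [map_inv]
          exact (Commute.inv_right (ha k : Commute (Lshift M k) (U a)) : _) }
      intro g
      refine PresentedGroup.generated_by _ H ?_ g
      intro i0 k0
      show Lshift M k0 * U (σA M i0) = U (σA M i0) * Lshift M k0
      rw [hU i0]
      -- reprove commuting here (same as previous part)
      apply Equiv.ext
      rintro ⟨l, t⟩
      rw [Equiv.Perm.mul_apply, Equiv.Perm.mul_apply, Uperm_eq_UFun, Uperm_eq_UFun,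
        hLshift (l, t) k0]
      by_cases h : (t : CoxGroup M) = sC M i0
      · rw [UFun_pos M i0 1 l t h, UFun_pos M i0 1 (k0 + l) t h, hLshift (l + 1, t) k0]
        refine Prod.ext ?_ rfl
        show k0 + (l + 1) = k0 + l + 1
        ring
      · rw [UFun_neg M i0 1 l t h, UFun_neg M i0 1 (k0 + l) t h]
        rfl
    have h1 : Lshift M k (U g (0, t)) = U g (Lshift M k (0, t)) := by
      rw [← Equiv.Perm.mul_apply, hC g k, Equiv.Perm.mul_apply]
    rw [h1, hLshift (0, t) k]
    norm_num
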